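/- Let X and Y be identically distributed random variables under upper expectations (𝔼₁[φ(X)] = 𝔼₂[φ(Y)] for all bounded Lipschitz φ). Then the Choquet integrals agree: C_{𝕍₁}(X) = C_{𝕍₂}(Y), where C_𝕍(Z) = ∫₀^∞ 𝕍(Z ≥ t) dt + ∫_{−∞}^0 [𝕍(Z ≥ t) − 1] dt. -/

import Mathlib

open MeasureTheory Set Filter

-- generic helpers for real-valued bounded suprema over a set
lemma myBiSup_le {ι : Type*} {s : Set ι} {f : ι → ℝ} {B : ℝ} (hB : 0 ≤ B)
    (hf : ∀ i ∈ s, f i ≤ B) : (⨆ j ∈ s, f j) ≤ B :=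
  Real.iSup_le (fun j => Real.iSup_le (fun hj => hf j hj) hB) hB

lemma le_myBiSup {ι : Type*} {s : Set ι} {f : ι → ℝ} {B : ℝ} (hB : 0 ≤ B)
    (hf : ∀ i ∈ s, f i ≤ B) {i : ι} (hi : i ∈ s) :
    f i ≤ ⨆ j ∈ s, f j := by
  have bdd : BddAbove (Set.range fun j => ⨆ _ : j ∈ s, f j) := by
    refine ⟨B, ?_⟩
    rintro x ⟨j, rfl⟩
    exact Real.iSup_le (fun hj => hf j hj) hB
  calc f i = ⨆ _ : i ∈ s, f i := (ciSup_pos (f := fun _ => f i) hi).symm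
    _ ≤ _ := le_ciSup bdd i

section aux

variable {Ω : Type*} [MeasurableSpace Ω]

/-- The upper survival function. -/
noncomputable def Sfun (Ps : Set (Measure Ω)) (X : Ω → ℝ) (t : ℝ) : ℝ :=
  ⨆ P ∈ Ps, (P {ω | t ≤ X ω}).toReal

lemma myToReal_le_one {P : Measure Ω} (hP : IsProbabilityMeasure P) (s : Set Ω) :
    (P s).toReal ≤ 1 := by
  have h1 : P s ≤ 1 := prob_le_one
  calc (P s).toReal ≤ (1 : ENNReal).toReal := ENNReal.toReal_mono ENNReal.one_ne_top h1
    _ = 1 := by simp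

lemma Sfun_le_one {Ps : Set (Measure Ω)} (h : ∀ P ∈ Ps, IsProbabilityMeasure P)
    (X : Ω → ℝ) (t : ℝ) : Sfun Ps X t ≤ 1 :=
  myBiSup_le zero_le_one (fun P hP => myToReal_le_one (h P hP) _)

lemma le_Sfun {Ps : Set (Measure Ω)} (h : ∀ P ∈ Ps, IsProbabilityMeasure P)
    (X : Ω → ℝ) (t : ℝ) {P : Measure Ω} (hP : P ∈ Ps) :
    (P {ω | t ≤ X ω}).toReal ≤ Sfun Ps X t :=
  le_myBiSup zero_le_one (fun Q hQ => myToReal_le_one (h Q hQ) _) hP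

lemma Sfun_nonneg {Ps : Set (Measure Ω)} (h : ∀ P ∈ Ps, IsProbabilityMeasure P)
    (hne : Ps.Nonempty) (X : Ω → ℝ) (t : ℝ) : 0 ≤ Sfun Ps X t := by
  obtain ⟨P, hP⟩ := hne
  exact le_trans ENNReal.toReal_nonneg (le_Sfun h X t hP)

lemma Sfun_antitone {Ps : Set (Measure Ω)} (h : ∀ P ∈ Ps, IsProbabilityMeasure P)
    (hne : Ps.Nonempty) (X : Ω → ℝ) : Antitone (Sfun Ps X) := by
  intro a b hab
  refine myBiSup_le (Sfun_nonneg h hne X a) (fun P hP => ?_)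
  haveI := h P hP
  refine le_trans ?_ (le_Sfun h X a hP)
  refine ENNReal.toReal_mono (measure_ne_top P _) (measure_mono ?_)
  intro ω hω
  exact le_trans hab hω

end aux

lemma clamp_lipschitz (s t : ℝ) :
    ∃ K, LipschitzWith K (fun x : ℝ => max (min ((x - s) / (t - s)) 1) 0) := by
  refine ⟨Real.toNNReal |(t - s)⁻¹|, LipschitzWith.of_dist_le_mul fun x y => ?_⟩
  simp only [Real.dist_eq, Real.coe_toNNReal _ (abs_nonneg _)]
  have h1 : |max (min ((x - s) / (t - s)) 1) 0 - max (min ((y - s) / (t - s)) 1) 0|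
      ≤ |min ((x - s) / (t - s)) 1 - min ((y - s) / (t - s)) 1| :=
    abs_max_sub_max_le_abs _ _ _
  have h2 : |min ((x - s) / (t - s)) 1 - min ((y - s) / (t - s)) 1|
      ≤ |(x - s) / (t - s) - (y - s) / (t - s)| := by
    refine le_trans (abs_min_sub_min_le_max _ _ _ _) ?_
    simp [abs_nonneg]
  refine le_trans h1 (le_trans h2 ?_)
  have h3 : (x - s) / (t - s) - (y - s) / (t - s) = (t - s)⁻¹ * (x - y) := by
    rw [div_sub_div_same, div_eq_inv_mul]
    ring_nf
  rw [h3, abs_mul]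

lemma key_ineq {Ωa Ωb : Type*} [MeasurableSpace Ωa] [MeasurableSpace Ωb] :
    ∀
      (Pa : Set (Measure Ωa)) (Pb : Set (Measure Ωb)),
      (∀ P ∈ Pa, IsProbabilityMeasure P) → (∀ P ∈ Pb, IsProbabilityMeasure P) →
      Pa.Nonempty → Pb.Nonempty →
      ∀ (X' : Ωa → ℝ) (Y' : Ωb → ℝ), Measurable X' → Measurable Y' →
      (∀ φ : ℝ → ℝ, (∃ K, LipschitzWith K φ) → (∃ M, ∀ x, |φ x| ≤ M) →
        (⨆ P ∈ Pa, ∫ ω, φ (X' ω) ∂P) = ⨆ P ∈ Pb, ∫ ω, φ (Y' ω) ∂P) →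
      ∀ {s t : ℝ}, s < t → Sfun Pa X' t ≤ Sfun Pb Y' s := by
    intro Pa Pb ha hb hnea hneb X' Y' hX' hY' hid' s t hst
    set φ : ℝ → ℝ := fun x => max (min ((x - s) / (t - s)) 1) 0 with hφdef
    have hts : (0:ℝ) < t - s := by linarith
    have hφ_lip : ∃ K, LipschitzWith K φ := clamp_lipschitz s t
    have hφ_nonneg : ∀ x, 0 ≤ φ x := fun x => le_max_right _ _
    have hφ_le_one : ∀ x, φ x ≤ 1 := fun x => max_le (min_le_right _ _) zero_le_one
    have hφ_bdd : ∃ M, ∀ x, |φ x| ≤ M :=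
      ⟨1, fun x => abs_le.2 ⟨by linarith [hφ_nonneg x], hφ_le_one x⟩⟩
    have hφ_one : ∀ x, t ≤ x → φ x = 1 := by
      intro x hx
      have h1 : (1:ℝ) ≤ (x - s) / (t - s) := by
        rw [le_div_iff₀ hts]; linarith
      simp [hφdef, min_eq_right h1, max_eq_left zero_le_one]
    have hφ_zero : ∀ x, x < s → φ x = 0 := by
      intro x hx
      have h1 : (x - s) / (t - s) < 0 := div_neg_of_neg_of_pos (by linarith) hts
      have h2 : min ((x - s) / (t - s)) 1 ≤ 0 := le_trans (min_le_left _ _) h1.le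
      simp [hφdef, max_eq_right h2]
    have hφ_cont : Continuous φ := hφ_lip.choose_spec.continuous
    have hintφX : ∀ (Q : Measure Ωa) [IsProbabilityMeasure Q],
        Integrable (fun ω => φ (X' ω)) Q := fun Q _ =>
      Integrable.mono' (integrable_const 1)
        ((hφ_cont.measurable.comp hX').aestronglyMeasurable)
        (ae_of_all _ fun ω => by
          rw [Real.norm_eq_abs]
          exact abs_le.2 ⟨by linarith [hφ_nonneg (X' ω)], hφ_le_one (X' ω)⟩)
    have hintφX_le : ∀ (Q : Measure Ωa) [IsProbabilityMeasure Q],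
        ∫ ω, φ (X' ω) ∂Q ≤ 1 := by
      intro Q hQi
      calc ∫ ω, φ (X' ω) ∂Q ≤ ∫ _, (1:ℝ) ∂Q :=
            integral_mono (hintφX Q) (integrable_const 1) (fun ω => hφ_le_one _)
        _ = 1 := by simp
    have int_le_sup : (⨆ P ∈ Pa, ∫ ω, φ (X' ω) ∂P) ≤ Sfun Pb Y' s := by
      rw [hid' φ hφ_lip hφ_bdd]
      refine myBiSup_le (Sfun_nonneg hb hneb Y' s) (fun Q hQ => ?_)
      haveI := hb Q hQ
      have hmeas : MeasurableSet {ω | s ≤ Y' ω} := measurableSet_le measurable_const hY'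
      have hind : ∫ ω, ({ω | s ≤ Y' ω}).indicator (fun _ => (1:ℝ)) ω ∂Q
          = (Q {ω | s ≤ Y' ω}).toReal := by
        rw [MeasureTheory.integral_indicator_const (1:ℝ) hmeas]; simp; rfl
      have hintφ : Integrable (fun ω => φ (Y' ω)) Q :=
        Integrable.mono' (integrable_const 1)
          ((hφ_cont.measurable.comp hY').aestronglyMeasurable)
          (ae_of_all _ fun ω => by
            rw [Real.norm_eq_abs]
            exact abs_le.2 ⟨by linarith [hφ_nonneg (Y' ω)], hφ_le_one (Y' ω)⟩)
      have hintind : Integrable (fun ω => ({ω | s ≤ Y' ω}).indicator (fun _ => (1:ℝ)) ω) Q :=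
        (integrable_const (1:ℝ)).indicator hmeas
      have hle : ∫ ω, φ (Y' ω) ∂Q ≤ (Q {ω | s ≤ Y' ω}).toReal := by
        rw [← hind]
        refine integral_mono hintφ hintind (fun ω => ?_)
        by_cases hω : s ≤ Y' ω
        · simp only [Set.indicator_of_mem (show ω ∈ {ω | s ≤ Y' ω} from hω)]
          exact hφ_le_one _
        · simp only [Set.indicator_of_notMem (show ω ∉ {ω | s ≤ Y' ω} from hω)]
          exact le_of_eq (hφ_zero _ (lt_of_not_ge hω))
      exact le_trans hle (le_Sfun hb Y' s hQ)
    refine le_trans ?_ int_le_sup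
    refine myBiSup_le ?_ (fun P hP => ?_)
    · obtain ⟨P, hP⟩ := hnea
      haveI := ha P hP
      have h0 : (0:ℝ) ≤ ∫ ω, φ (X' ω) ∂P := integral_nonneg fun ω => hφ_nonneg _
      refine le_trans h0 (le_myBiSup (f := fun Q => ∫ ω, φ (X' ω) ∂Q) zero_le_one
        (fun Q hQ => by haveI := ha Q hQ; exact hintφX_le Q) hP)
    · haveI := ha P hP
      have hmeas : MeasurableSet {ω | t ≤ X' ω} := measurableSet_le measurable_const hX'
      have hind : ∫ ω, ({ω | t ≤ X' ω}).indicator (fun _ => (1:ℝ)) ω ∂P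
          = (P {ω | t ≤ X' ω}).toReal := by
        rw [MeasureTheory.integral_indicator_const (1:ℝ) hmeas]; simp; rfl
      have hintind : Integrable (fun ω => ({ω | t ≤ X' ω}).indicator (fun _ => (1:ℝ)) ω) P :=
        (integrable_const (1:ℝ)).indicator hmeas
      have hle : (P {ω | t ≤ X' ω}).toReal ≤ ∫ ω, φ (X' ω) ∂P := by
        rw [← hind]
        refine integral_mono hintind (hintφX P) (fun ω => ?_)
        by_cases hω : t ≤ X' ω
        · simp only [Set.indicator_of_mem (show ω ∈ {ω | t ≤ X' ω} from hω)]
          exact le_of_eq (hφ_one _ hω).symm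
        · simp only [Set.indicator_of_notMem (show ω ∉ {ω | t ≤ X' ω} from hω)]
          exact hφ_nonneg _
      exact le_trans hle (le_myBiSup (f := fun Q => ∫ ω, φ (X' ω) ∂Q) zero_le_one
        (fun Q hQ => by haveI := ha Q hQ; exact hintφX_le Q) hP)

lemma hcnt {Ω' : Type*} [MeasurableSpace Ω'] (Ps' : Set (Measure Ω'))
  (h' : ∀ P ∈ Ps', IsProbabilityMeasure P) (hne' : Ps'.Nonempty) (Z : Ω' → ℝ) :
  {x | ¬ContinuousAt (Sfun Ps' Z) x}.Countable := by
  have hmono : Monotone (fun x => -Sfun Ps' Z x) :=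
    fun a b hab => neg_le_neg (Sfun_antitone h' hne' Z hab)
  refine hmono.countable_not_continuousAt.mono (fun x hx => ?_)
  simp only [Set.mem_setOf_eq] at hx ⊢
  intro hc
  exact hx (by convert hc.neg using 1; funext y; simp)

set_option maxHeartbeats 1000000 in
theorem stmt1 {Ω₁ Ω₂ : Type*} [MeasurableSpace Ω₁] [MeasurableSpace Ω₂]
    (𝒫₁ : Set (Measure Ω₁)) (𝒫₂ : Set (Measure Ω₂))
    (h₁ : ∀ P ∈ 𝒫₁, IsProbabilityMeasure P) (h₂ : ∀ P ∈ 𝒫₂, IsProbabilityMeasure P)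
    (hne₁ : 𝒫₁.Nonempty) (hne₂ : 𝒫₂.Nonempty)
    (X : Ω₁ → ℝ) (Y : Ω₂ → ℝ) (hX : Measurable X) (hY : Measurable Y)
    (hid : ∀ φ : ℝ → ℝ, (∃ K, LipschitzWith K φ) → (∃ M, ∀ x, |φ x| ≤ M) →
      (⨆ P ∈ 𝒫₁, ∫ ω, φ (X ω) ∂P) = ⨆ P ∈ 𝒫₂, ∫ ω, φ (Y ω) ∂P) :
    (∫ t in Set.Ioi (0:ℝ), (⨆ P ∈ 𝒫₁, (P {ω | t ≤ X ω}).toReal))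
      + (∫ t in Set.Iio (0:ℝ), ((⨆ P ∈ 𝒫₁, (P {ω | t ≤ X ω}).toReal) - 1))
    = (∫ t in Set.Ioi (0:ℝ), (⨆ P ∈ 𝒫₂, (P {ω | t ≤ Y ω}).toReal))
      + ∫ t in Set.Iio (0:ℝ), ((⨆ P ∈ 𝒫₂, (P {ω | t ≤ Y ω}).toReal) - 1) := by
  -- Key inequality: for s < t, (Sfun 𝒫₁ X) t ≤ (Sfun 𝒫₂ Y) s, and symmetrically.
  have key12 : ∀ {s t : ℝ}, s < t → (Sfun 𝒫₁ X) t ≤ (Sfun 𝒫₂ Y) s :=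
    fun {s t} hst => key_ineq 𝒫₁ 𝒫₂ h₁ h₂ hne₁ hne₂ X Y hX hY hid hst
  have key21 : ∀ {s t : ℝ}, s < t → (Sfun 𝒫₂ Y) t ≤ (Sfun 𝒫₁ X) s :=
    fun {s t} hst => key_ineq 𝒫₂ 𝒫₁ h₂ h₁ hne₂ hne₁ Y X hY hX
      (fun φ hl hb => (hid φ hl hb).symm) hst
  -- discontinuity sets of the antitone survival functions are countable
  set D : Set ℝ := {x | ¬ContinuousAt (Sfun 𝒫₁ X) x} ∪ {x | ¬ContinuousAt (Sfun 𝒫₂ Y) x} with hD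
  have hDcnt : D.Countable := (hcnt 𝒫₁ h₁ hne₁ X).union (hcnt 𝒫₂ h₂ hne₂ Y)
  have heq : ∀ t ∉ D, (Sfun 𝒫₁ X) t = (Sfun 𝒫₂ Y) t := by
    intro t ht
    rw [hD, Set.mem_union] at ht
    push_neg at ht
    simp only [Set.mem_setOf_eq, not_not] at ht
    obtain ⟨hc₁, hc₂⟩ := ht
    have hle₁ : (Sfun 𝒫₁ X) t ≤ (Sfun 𝒫₂ Y) t := by
      have htend : Tendsto (Sfun 𝒫₂ Y) (nhdsWithin t (Set.Iio t)) (nhds ((Sfun 𝒫₂ Y) t)) :=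
        hc₂.continuousWithinAt
      refine ge_of_tendsto htend ?_
      filter_upwards [self_mem_nhdsWithin] with u hu
      exact key12 hu
    have hle₂ : (Sfun 𝒫₂ Y) t ≤ (Sfun 𝒫₁ X) t := by
      have htend : Tendsto (Sfun 𝒫₁ X) (nhdsWithin t (Set.Iio t)) (nhds ((Sfun 𝒫₁ X) t)) :=
        hc₁.continuousWithinAt
      refine ge_of_tendsto htend ?_
      filter_upwards [self_mem_nhdsWithin] with u hu
      exact key21 hu
    linarith
  have hae : (Sfun 𝒫₁ X) =ᵐ[volume] (Sfun 𝒫₂ Y) := by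
    have hsub : {t | (Sfun 𝒫₁ X) t ≠ (Sfun 𝒫₂ Y) t} ⊆ D := fun t ht => by
      by_contra hc
      exact ht (heq t hc)
    exact measure_mono_null hsub (hDcnt.measure_zero volume)
  have h1 : (∫ t in Set.Ioi (0:ℝ), (Sfun 𝒫₁ X) t) = ∫ t in Set.Ioi (0:ℝ), (Sfun 𝒫₂ Y) t :=
    integral_congr_ae (ae_restrict_of_ae hae)
  have h2 : (∫ t in Set.Iio (0:ℝ), ((Sfun 𝒫₁ X) t - 1)) = ∫ t in Set.Iio (0:ℝ), ((Sfun 𝒫₂ Y) t - 1) := by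
    refine integral_congr_ae (ae_restrict_of_ae ?_)
    filter_upwards [hae] with u hu
    rw [hu]
  show (∫ t in Set.Ioi (0:ℝ), Sfun 𝒫₁ X t) + ∫ t in Set.Iio (0:ℝ), (Sfun 𝒫₁ X t - 1)
      = (∫ t in Set.Ioi (0:ℝ), Sfun 𝒫₂ Y t) + ∫ t in Set.Iio (0:ℝ), (Sfun 𝒫₂ Y t - 1)
  rw [h1, h2]
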